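/- arXiv:1801.04902 — 4 statements merged into one kernel-verified Lean document; each statement's English description precedes it below -/
import Mathlib

section
/- For every natural number ℓ and every α with −1 < α < 1, the eigenvalue λ_δ(ℓ) converges to the local eigenvalue as the horizon shrinks: λ_δ(ℓ) → −ℓ(ℓ+1) as δ → 0⁺. -/
open MeasureTheory Real Polynomial

/-- The ℓ-th Legendre polynomial, via Rodrigues' formula. -/
noncomputable def legendre (l : ℕ) : Polynomial ℝ :=
  (((2 : ℝ) ^ l * l.factorial)⁻¹) • ((derivative (R := ℝ)) ^ l) ((X ^ 2 - 1) ^ l)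

/-- The eigenvalue `λ_δ(ℓ)` of the nonlocal Laplace–Beltrami operator with the weakly
singular kernel with singularity strength `α` and horizon `δ`. -/
noncomputable def lambdaNL (α δ : ℝ) (l : ℕ) : ℝ :=
  2 * π * ∫ t in (1 - δ ^ 2 / 2)..1,
    ((legendre l).eval t - 1) * ((1 + α) * (2 : ℝ) ^ (1 + α) / (π * δ ^ (2 + 2 * α) * (1 - t) ^ (1 - α)))


lemma key (l : ℕ) : ∀ g : Polynomial ℝ, ∃ h : Polynomial ℝ,
    derivative^[l] ((X - C 1) ^ l * g) =
      C (l.factorial : ℝ) * g + C ((l * l.factorial : ℕ) : ℝ) * ((X - C 1) * derivative g)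
        + (X - C 1) ^ 2 * h := by
  induction l with
  | zero => intro g; exact ⟨0, by simp⟩
  | succ n ih =>
    intro g
    obtain ⟨h₁, e₁⟩ := ih g
    obtain ⟨h₂, e₂⟩ := ih ((X - C 1) * derivative g)
    refine ⟨C ((n+1 : ℕ) : ℝ) * h₁ + h₂ + C ((n * n.factorial : ℕ) : ℝ) * derivative (derivative g), ?_⟩
    have step : derivative ((X - C 1) ^ (n+1) * g) =
        C ((n+1 : ℕ) : ℝ) * ((X - C 1) ^ n * g) + (X - C 1) ^ n * ((X - C 1) * derivative g) := by
      rw [derivative_mul, derivative_pow]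
      simp only [derivative_sub, derivative_X, derivative_C, sub_zero, mul_one]
      push_cast
      ring
    rw [Function.iterate_succ_apply, step]
    rw [iterate_map_add, iterate_derivative_C_mul, e₁, e₂]
    rw [derivative_mul]
    simp only [derivative_sub, derivative_X, derivative_C, sub_zero, one_mul]
    simp only [Nat.factorial_succ]
    push_cast
    simp only [map_add, map_mul, map_one]
    ring

lemma factored (l : ℕ) : ((X : Polynomial ℝ) ^ 2 - 1) ^ l = (X - C 1) ^ l * (X + C 1) ^ l := by
  rw [← mul_pow]; ring_nf; simp [C_1]; ring_nf

lemma legendre_eq (l : ℕ) : ∃ h : Polynomial ℝ,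
    legendre l = (((2 : ℝ) ^ l * l.factorial)⁻¹) •
      (C (l.factorial : ℝ) * (X + C 1) ^ l
        + C ((l * l.factorial : ℕ) : ℝ) * ((X - C 1) * (C (l : ℝ) * (X + C 1) ^ (l - 1)))
        + (X - C 1) ^ 2 * h) := by
  obtain ⟨h, e⟩ := key l ((X + C 1) ^ l)
  refine ⟨h, ?_⟩
  rw [legendre, Module.End.pow_apply, factored, e, derivative_pow]
  simp [derivative_add, derivative_X, derivative_C]

lemma legendre_eval_one (l : ℕ) : (legendre l).eval 1 = 1 := by
  obtain ⟨h, e⟩ := legendre_eq l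
  rw [e]
  simp only [eval_smul, eval_add, eval_mul, eval_pow, eval_sub, eval_X, eval_C, eval_one,
    smul_eq_mul]
  norm_num
  field_simp

lemma legendre_deriv_eval_one (l : ℕ) :
    (derivative (legendre l)).eval 1 = l * (l + 1) / 2 := by
  rcases Nat.eq_zero_or_pos l with rfl | hl
  · have : legendre 0 = 1 := by
      simp [legendre]
    rw [this]
    simp
  obtain ⟨h, e⟩ := legendre_eq l
  rw [e, derivative_smul, eval_smul]
  simp only [derivative_add, derivative_mul, derivative_pow, derivative_sub, derivative_X,
    derivative_C, derivative_one, sub_zero, mul_one, one_mul, add_zero, zero_mul, zero_add,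
    mul_zero]
  simp only [eval_add, eval_mul, eval_sub, eval_pow, eval_X, eval_C, eval_one, eval_natCast,
    sub_self, zero_mul, mul_zero, add_zero, zero_add, smul_eq_mul]
  have h2 : (2:ℝ) ^ l = 2 ^ (l-1) * 2 := by
    rw [← pow_succ, Nat.sub_add_cancel hl]
  have hf : (l.factorial : ℝ) ≠ 0 := by positivity
  push_cast
  norm_num
  rw [h2]
  field_simp
  ring

lemma legendre_expansion (l : ℕ) : ∃ R : Polynomial ℝ, ∀ t : ℝ,
    (legendre l).eval t - 1 = (t - 1) * ((l:ℝ) * ((l:ℝ) + 1) / 2) + (t - 1) ^ 2 * R.eval t := by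
  have hroot : IsRoot (legendre l - C 1) 1 := by
    simp [IsRoot, legendre_eval_one]
  set Q := (legendre l - C 1) /ₘ (X - C 1) with hQdef
  have hQ : (X - C 1) * Q = legendre l - C 1 := mul_divByMonic_eq_iff_isRoot.2 hroot
  have hQ1 : Q.eval 1 = (l:ℝ) * ((l:ℝ) + 1) / 2 := by
    have hd := congrArg derivative hQ
    rw [derivative_mul] at hd
    have := congrArg (eval 1) hd
    simp only [derivative_sub, derivative_X, derivative_C, sub_zero, eval_add, eval_mul,
      eval_sub, eval_X, eval_C, sub_self, zero_mul, add_zero, one_mul] at this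
    rw [this, legendre_deriv_eval_one]
  have hR : (X - C 1) * ((Q - C (Q.eval 1)) /ₘ (X - C 1)) = Q - C (Q.eval 1) :=
    mul_divByMonic_eq_iff_isRoot.2 (by simp [IsRoot])
  refine ⟨(Q - C (Q.eval 1)) /ₘ (X - C 1), fun t => ?_⟩
  have e1 := congrArg (eval t) hQ
  have e2 := congrArg (eval t) hR
  simp only [eval_mul, eval_sub, eval_X, eval_C, eval_one] at e1 e2
  rw [← hQ1]
  linear_combination -e1 - (t - 1) * e2

lemma alg1 (α u q r c d : ℝ) (hu : 0 < u) :
    ((u * q) + u ^ 2 * r) * (c / (d * u ^ (1 - α))) =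
      ((q * u ^ α) + r * u ^ (1 + α)) * (c / d) := by
  have h1 : u ^ (1 - α) ≠ 0 := (Real.rpow_pos_of_pos hu _).ne'
  have e1 : u ^ α * u ^ (1 - α) = u := by
    rw [← Real.rpow_add hu]; ring_nf; exact Real.rpow_one u
  have e2 : u ^ (1 + α) * u ^ (1 - α) = u ^ 2 := by
    rw [← Real.rpow_add hu]
    have : (1 : ℝ) + α + (1 - α) = ((2 : ℕ) : ℝ) := by push_cast; ring
    rw [this, Real.rpow_natCast]
  have key : ((q * u ^ α) + r * u ^ (1 + α)) * u ^ (1 - α) = (u * q) + u ^ 2 * r := by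
    rw [add_mul, mul_assoc, e1, mul_assoc, e2]; ring
  rw [← div_div]
  rw [show ((u * q) + u ^ 2 * r) * (c / d / u ^ (1 - α))
      = (((u * q) + u ^ 2 * r) / u ^ (1 - α)) * (c / d) by ring]
  rw [← key, mul_div_assoc, div_self h1, mul_one]


lemma main_est (l : ℕ) (α : ℝ) (hα : -1 < α) (hα1 : α < 1) :
    ∃ M : ℝ, 0 ≤ M ∧ ∀ δ : ℝ, 0 < δ → δ ≤ 1 →
      |lambdaNL α δ l + (l:ℝ) * ((l:ℝ) + 1)| ≤ M * δ ^ 2 := by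
  obtain ⟨R, hRex⟩ := legendre_expansion l
  obtain ⟨B, hB⟩ := (isCompact_Icc (a := (0:ℝ)) (b := 1)).exists_bound_of_continuousOn
    (f := fun t => R.eval t) R.continuous.continuousOn
  have hB0 : 0 ≤ B := le_trans (norm_nonneg _) (hB 0 (by norm_num))
  refine ⟨2 * B, by linarith, fun δ hδ hδ1 => ?_⟩
  set ε := δ ^ 2 / 2 with hε
  have hε0 : 0 < ε := by positivity
  have hεhalf : ε ≤ 1 / 2 := by rw [hε]; nlinarith
  set a := 1 - ε with ha
  have ha1 : a < 1 := by rw [ha]; linarith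
  have ha0 : 0 ≤ a := by rw [ha]; linarith
  set κ := (1 + α) * (2:ℝ) ^ (1 + α) / (π * δ ^ (2 + 2 * α)) with hκ
  have hπ := Real.pi_pos
  have hδr : (0:ℝ) < δ ^ (2 + 2 * α) := Real.rpow_pos_of_pos hδ _
  have h2r : (0:ℝ) < (2:ℝ) ^ (1 + α) := Real.rpow_pos_of_pos (by norm_num) _
  have hκ0 : 0 < κ := by
    rw [hκ]; apply div_pos; nlinarith; positivity
  set Q1 := (l:ℝ) * ((l:ℝ) + 1) / 2 with hQ1
  -- integrability
  have i1 : IntervalIntegrable (fun t : ℝ => (1 - t) ^ α) volume a 1 := by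
    have := (intervalIntegral.intervalIntegrable_rpow' (a := 1 - a) (b := 0) hα).comp_sub_left 1
    simpa using this
  have contpow : Continuous (fun t : ℝ => (1 - t) ^ (1 + α)) := by
    rw [continuous_iff_continuousAt]
    intro x
    exact (Real.continuousAt_rpow_const _ _ (Or.inr (by linarith))).comp
      ((continuous_const.sub continuous_id).continuousAt)
  have i2 : IntervalIntegrable (fun t : ℝ => R.eval t * (1 - t) ^ (1 + α)) volume a 1 :=
    (R.continuous.mul contpow).intervalIntegrable _ _
  -- a.e. equality
  have hcong : (∫ t in a..1, ((legendre l).eval t - 1) *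
        ((1 + α) * (2:ℝ) ^ (1 + α) / (π * δ ^ (2 + 2 * α) * (1 - t) ^ (1 - α))))
      = ∫ t in a..1, ((-(κ * Q1)) * (1 - t) ^ α + κ * (R.eval t * (1 - t) ^ (1 + α))) := by
    apply intervalIntegral.integral_congr_ae
    have hne : ∀ᵐ t : ℝ, t ≠ 1 := by
      refine MeasureTheory.ae_iff.2 ?_
      simp only [ne_eq, not_not, Set.setOf_eq_eq_singleton]
      exact measure_singleton 1
    filter_upwards [hne] with t ht htmem
    rw [Set.uIoc_of_le ha1.le] at htmem
    have ht1 : t < 1 := lt_of_le_of_ne htmem.2 ht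
    have hu : 0 < 1 - t := by linarith
    rw [hRex t]
    rw [show (t - 1) * ((l:ℝ) * ((l:ℝ) + 1) / 2) + (t - 1) ^ 2 * R.eval t
        = (1 - t) * (-Q1) + (1 - t) ^ 2 * R.eval t by rw [hQ1]; ring]
    rw [alg1 α (1 - t) (-Q1) (R.eval t) ((1 + α) * (2:ℝ) ^ (1 + α)) (π * δ ^ (2 + 2 * α)) hu]
    rw [hκ]; ring
  -- value of the rpow integral
  have hpow : (∫ t in a..1, (1 - t) ^ α) = ε ^ (α + 1) / (α + 1) := by
    rw [intervalIntegral.integral_comp_sub_left (fun u : ℝ => u ^ α) 1]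
    rw [show (1:ℝ) - 1 = 0 by norm_num, show (1:ℝ) - a = ε by rw [ha]; ring]
    rw [integral_rpow (Or.inl hα)]
    rw [Real.zero_rpow (by linarith : α + 1 ≠ 0)]
    ring
  set E := ∫ t in a..1, R.eval t * (1 - t) ^ (1 + α) with hE
  have hval : (∫ t in a..1, ((-(κ * Q1)) * (1 - t) ^ α + κ * (R.eval t * (1 - t) ^ (1 + α))))
      = (-(κ * Q1)) * (ε ^ (α + 1) / (α + 1)) + κ * E := by
    rw [intervalIntegral.integral_add (i1.const_mul _) (i2.const_mul _),
      intervalIntegral.integral_const_mul, intervalIntegral.integral_const_mul, hpow]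
  -- arithmetic: the main coefficient
  have hε1 : ε ^ (α + 1) = δ ^ (2 + 2 * α) / (2:ℝ) ^ (α + 1) := by
    rw [hε, Real.div_rpow (sq_nonneg δ) (by norm_num : (0:ℝ) ≤ 2)]
    congr 1
    rw [← Real.rpow_natCast δ 2, ← Real.rpow_mul hδ.le]
    norm_num; ring_nf
  have h2r' : (0:ℝ) < (2:ℝ) ^ (α + 1) := Real.rpow_pos_of_pos (by norm_num) _
  have h21 : (2:ℝ) ^ (1 + α) = (2:ℝ) ^ (α + 1) := by rw [add_comm]
  have hmain2 : 2 * π * κ * ε ^ (α + 1) = 2 * (α + 1) := by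
    rw [hκ, hε1, h21]
    field_simp
    ring
  -- error bound
  have hEb : |E| ≤ B * ε ^ (α + 1) * ε := by
    have hb : ∀ x ∈ Set.uIoc a 1, ‖R.eval x * (1 - x) ^ (1 + α)‖ ≤ B * ε ^ (α + 1) := by
      intro x hx
      rw [Set.uIoc_of_le ha1.le] at hx
      rw [Real.norm_eq_abs, abs_mul]
      have hx0 : 0 ≤ 1 - x := by linarith [hx.2]
      have hx1 : 1 - x ≤ ε := by have := hx.1; rw [ha] at this; linarith
      have b1 : |R.eval x| ≤ B := by
        have := hB x ⟨le_trans ha0 hx.1.le, hx.2⟩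
        rwa [Real.norm_eq_abs] at this
      have b2 : |(1 - x) ^ (1 + α)| ≤ ε ^ (α + 1) := by
        rw [abs_of_nonneg (Real.rpow_nonneg hx0 _)]
        calc (1 - x) ^ (1 + α) ≤ ε ^ (1 + α) :=
              Real.rpow_le_rpow hx0 hx1 (by linarith)
          _ = ε ^ (α + 1) := by rw [add_comm]
      exact mul_le_mul b1 b2 (abs_nonneg _) hB0
    have := intervalIntegral.norm_integral_le_of_norm_le_const hb
    rw [Real.norm_eq_abs] at this
    calc |E| ≤ B * ε ^ (α + 1) * |1 - a| := this
      _ = B * ε ^ (α + 1) * ε := by rw [show |1 - a| = ε by rw [abs_of_nonneg (by linarith), ha]; ring]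
  -- representation
  have hrep : lambdaNL α δ l + (l:ℝ) * ((l:ℝ) + 1) = 2 * π * κ * E := by
    have hunfold : lambdaNL α δ l = 2 * π * ((-(κ * Q1)) * (ε ^ (α + 1) / (α + 1)) + κ * E) := by
      rw [lambdaNL, show 1 - δ ^ 2 / 2 = a by rw [ha, hε], hcong, hval]
    have habs : ∀ s E2 : ℝ, 2 * π * (κ * s) = 2 →
        2 * π * ((-(κ * Q1)) * s + κ * E2) + 2 * Q1 = 2 * π * κ * E2 := by
      intro s E2 h
      linear_combination (-Q1) * h
    rw [hunfold]
    have h2Q : (l:ℝ) * ((l:ℝ) + 1) = 2 * Q1 := by rw [hQ1]; ring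
    rw [h2Q]
    exact habs _ E (by rw [show 2 * π * (κ * (ε ^ (α + 1) / (α + 1))) = 2 * π * κ * ε ^ (α + 1) / (α + 1) by ring, hmain2, mul_div_assoc, div_self (by linarith : (α:ℝ) + 1 ≠ 0), mul_one])
  rw [hrep]
  have h2πκ : 0 < 2 * π * κ := by positivity
  calc |2 * π * κ * E| = 2 * π * κ * |E| := by rw [abs_mul, abs_of_nonneg h2πκ.le]
    _ ≤ 2 * π * κ * (B * ε ^ (α + 1) * ε) := mul_le_mul_of_nonneg_left hEb h2πκ.le
    _ = (2 * π * κ * ε ^ (α + 1)) * B * ε := by ring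
    _ ≤ 2 * B * δ ^ 2 := by rw [hmain2, hε]; nlinarith [mul_nonneg (mul_nonneg (by linarith : (0:ℝ) ≤ 1 - α) hB0) (sq_nonneg δ)]


/-- `λ_δ(ℓ) → −ℓ(ℓ+1)` as `δ → 0⁺`. -/
theorem lambda_tendsto_local (l : ℕ) (α : ℝ) (hα : -1 < α) (hα1 : α < 1) :
    Filter.Tendsto (fun δ : ℝ => lambdaNL α δ l) (nhdsWithin 0 (Set.Ioi 0))
      (nhds (-((l : ℝ) * ((l : ℝ) + 1)))) := by
  obtain ⟨M, hM0, hM⟩ := main_est l α hα hα1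
  rw [tendsto_iff_norm_sub_tendsto_zero]
  have hg : Filter.Tendsto (fun δ : ℝ => M * δ ^ 2) (nhdsWithin 0 (Set.Ioi 0)) (nhds 0) := by
    have h := (Continuous.tendsto (by continuity : Continuous fun δ : ℝ => M * δ ^ 2) 0)
    simpa using h.mono_left nhdsWithin_le_nhds
  apply squeeze_zero' (Filter.Eventually.of_forall fun t => norm_nonneg _) ?_ hg
  filter_upwards [Ioo_mem_nhdsGT_of_mem (by norm_num : (0:ℝ) ∈ Set.Ico (0:ℝ) 1)] with δ hδ
  rw [Real.norm_eq_abs, sub_neg_eq_add]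
  exact hM δ hδ.1 hδ.2.le
end

section
/- For every natural number ℓ, ∫_{−1}^{1} (P_ℓ(t) − 1)·(1−t)^{−3/2} dt = −2^{3/2}·ℓ. Equivalently, for the kernel parameters α = −1/2 and δ = 2 the eigenvalue of the nonlocal Laplace–Beltrami operator is λ_2(ℓ) = −2ℓ. -/
open MeasureTheory Real Polynomial

namespace Leg

noncomputable def A (l : ℕ) : Polynomial ℝ :=
  (((2 : ℝ) ^ l * l.factorial)⁻¹) • ((derivative (R := ℝ)) ^ (l - 1)) ((X ^ 2 - 1) ^ l)

lemma dpow_succ (n : ℕ) (p : ℝ[X]) :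
    ((derivative (R := ℝ)) ^ (n+1)) p = ((derivative (R := ℝ)) ^ n) (derivative p) := by
  rw [pow_succ, Module.End.mul_apply]

lemma dpow_succ' (n : ℕ) (p : ℝ[X]) :
    ((derivative (R := ℝ)) ^ (n+1)) p = derivative (((derivative (R := ℝ)) ^ n) p) := by
  rw [pow_succ', Module.End.mul_apply]

lemma dpow_X_mul (n : ℕ) (p : ℝ[X]) :
    ((derivative (R := ℝ)) ^ n) (X * p)
      = X * ((derivative (R := ℝ)) ^ n) p + n • ((derivative (R := ℝ)) ^ (n-1)) p := by
  induction n generalizing p with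
  | zero => simp
  | succ n ih =>
    rw [dpow_succ, derivative_mul, derivative_X, one_mul, map_add, ih (derivative p),
      ← dpow_succ]
    have hn : n • ((derivative (R := ℝ)) ^ (n-1)) (derivative p)
        = n • ((derivative (R := ℝ)) ^ n) p := by
      cases n with
      | zero => simp
      | succ k => rw [Nat.succ_sub_one, ← dpow_succ]
    rw [hn]
    rw [Nat.add_sub_cancel]
    rw [succ_nsmul]
    ring

lemma dpow_sq_mul (n : ℕ) (p : ℝ[X]) :
    ((derivative (R := ℝ)) ^ n) ((X^2 - 1) * p)
      = (X^2 - 1) * ((derivative (R := ℝ)) ^ n) p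
        + (2*n) • (X * ((derivative (R := ℝ)) ^ (n-1)) p)
        + (n*(n-1)) • ((derivative (R := ℝ)) ^ (n-2)) p := by
  have h : (X^2 - 1 : ℝ[X]) * p = X * (X * p) - p := by ring
  rw [h, map_sub, dpow_X_mul, dpow_X_mul, dpow_X_mul]
  have h2 : (n-1) - 1 = n - 2 := by omega
  rw [h2, mul_add, smul_add, smul_smul]
  have h3 : X * (n • ((derivative (R := ℝ)) ^ (n-1)) p) = n • (X * ((derivative (R := ℝ)) ^ (n-1)) p) := by
    rw [mul_smul_comm]
  rw [h3, two_mul, add_smul]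
  ring

end Leg

namespace Leg

lemma nsmul_C (n : ℕ) (p : ℝ[X]) : n • p = C (n:ℝ) * p := by
  rw [← Nat.cast_smul_eq_nsmul ℝ n, Polynomial.smul_eq_C_mul]

/-- C-form of dpow_X_mul -/
lemma dpow_X_mul' (n : ℕ) (p : ℝ[X]) :
    ((derivative (R := ℝ)) ^ n) (X * p)
      = X * ((derivative (R := ℝ)) ^ n) p + C (n:ℝ) * ((derivative (R := ℝ)) ^ (n-1)) p := by
  rw [dpow_X_mul, nsmul_C]

lemma dpow_sq_mul' (n : ℕ) (p : ℝ[X]) :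
    ((derivative (R := ℝ)) ^ n) ((X^2 - 1) * p)
      = (X^2 - 1) * ((derivative (R := ℝ)) ^ n) p
        + C (2*(n:ℝ)) * (X * ((derivative (R := ℝ)) ^ (n-1)) p)
        + C ((n:ℝ)*((n:ℝ)-1)) * ((derivative (R := ℝ)) ^ (n-2)) p := by
  rw [dpow_sq_mul, nsmul_C, nsmul_C]
  cases n with
  | zero => simp
  | succ k =>
    have h1 : ((2*(k+1) : ℕ) : ℝ) = 2*((k:ℝ)+1) := by push_cast; ring
    have h2 : (((k+1)*((k+1)-1) : ℕ) : ℝ) = ((k:ℝ)+1)*(((k:ℝ)+1)-1) := by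
      push_cast [Nat.add_sub_cancel]; ring
    rw [h1, h2]
    push_cast
    ring

lemma legendre_eq (l : ℕ) :
    legendre l = C (((2 : ℝ) ^ l * l.factorial)⁻¹) * ((derivative (R := ℝ)) ^ l) (((X:ℝ[X]) ^ 2 - 1) ^ l) := by
  rw [legendre, Polynomial.smul_eq_C_mul]

lemma A_eq (l : ℕ) :
    A l = C (((2 : ℝ) ^ l * l.factorial)⁻¹) * ((derivative (R := ℝ)) ^ (l-1)) (((X:ℝ[X]) ^ 2 - 1) ^ l) := by
  rw [A, Polynomial.smul_eq_C_mul]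

lemma deriv_W_succ (l : ℕ) :
    derivative (((X:ℝ[X])^2 - 1) ^ (l+1)) = C (2*((l:ℝ)+1)) * (X * ((X:ℝ[X])^2 - 1) ^ l) := by
  rw [derivative_pow]
  simp
  rw [show (C 2 : ℝ[X]) = 2 from map_ofNat C 2]
  ring

lemma c_rel (l : ℕ) : (((2 : ℝ) ^ (l+1) * (l+1).factorial)⁻¹) * (2*((l:ℝ)+1))
    = ((2 : ℝ) ^ l * l.factorial)⁻¹ := by
  have h1 : ((l:ℝ)+1) ≠ 0 := by positivity
  have h2 : ((l.factorial : ℝ)) ≠ 0 := Nat.cast_ne_zero.2 l.factorial_ne_zero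
  rw [Nat.factorial_succ]
  push_cast
  field_simp
  ring

lemma dpow_C_mul (n : ℕ) (a : ℝ) (p : ℝ[X]) :
    ((derivative (R := ℝ)) ^ n) (C a * p) = C a * ((derivative (R := ℝ)) ^ n) p := by
  rw [← Polynomial.smul_eq_C_mul, ← Polynomial.smul_eq_C_mul, _root_.map_smul]

lemma dpow_W_succ (l : ℕ) :
    ((derivative (R := ℝ)) ^ (l+1)) (((X:ℝ[X])^2 - 1) ^ (l+1))
      = C (2*((l:ℝ)+1)) * (X * ((derivative (R := ℝ)) ^ l) (((X:ℝ[X])^2-1)^l)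
          + C (l:ℝ) * ((derivative (R := ℝ)) ^ (l-1)) (((X:ℝ[X])^2-1)^l)) := by
  rw [dpow_succ, deriv_W_succ, dpow_C_mul, dpow_X_mul']

/-- R1 : legendre (l+1) = X * legendre l + l • A l -/
lemma R1 (l : ℕ) : legendre (l+1) = X * legendre l + C (l:ℝ) * A l := by
  rw [legendre_eq, legendre_eq, A_eq, dpow_W_succ,
    ← mul_assoc, ← C_mul, c_rel]
  ring

/-- key for R2 -/
lemma key2 (l : ℕ) :
    ((X:ℝ[X])^2 - 1) * ((derivative (R := ℝ)) ^ (l+1)) (((X:ℝ[X])^2-1)^l)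
      = C ((l:ℝ)*((l:ℝ)+1)) * ((derivative (R := ℝ)) ^ (l-1)) (((X:ℝ[X])^2-1)^l) := by
  have e1 := dpow_W_succ l
  have e2 : ((derivative (R := ℝ)) ^ (l+1)) (((X:ℝ[X])^2 - 1) ^ (l+1))
      = ((X:ℝ[X])^2 - 1) * ((derivative (R := ℝ)) ^ (l+1)) (((X:ℝ[X])^2-1)^l)
        + C (2*((l:ℝ)+1)) * (X * ((derivative (R := ℝ)) ^ l) (((X:ℝ[X])^2-1)^l))
        + C (((l:ℝ)+1)*(l:ℝ)) * ((derivative (R := ℝ)) ^ (l-1)) (((X:ℝ[X])^2-1)^l) := by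
    have h : (((X:ℝ[X])^2 - 1) ^ (l+1)) = ((X:ℝ[X])^2 - 1) * ((X:ℝ[X])^2-1)^l := by
      rw [pow_succ]; ring
    rw [h, dpow_sq_mul']
    have i1 : (l+1) - 1 = l := by omega
    have i2 : (l+1) - 2 = l - 1 := by omega
    rw [i1, i2]
    push_cast
    ring_nf
  rw [e1] at e2
  simp only [map_mul, map_add, map_one, map_ofNat] at e2 ⊢
  linear_combination -e2

/-- R2 -/
lemma R2 (l : ℕ) : ((X:ℝ[X])^2 - 1) * derivative (legendre l) = C ((l:ℝ)*((l:ℝ)+1)) * A l := by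
  rw [legendre_eq, A_eq, derivative_C_mul, ← dpow_succ']
  rw [mul_left_comm, key2]
  ring

lemma A_deriv (l : ℕ) (hl : 1 ≤ l) : derivative (A l) = legendre l := by
  have h : l - 1 + 1 = l := by omega
  rw [A_eq, legendre_eq, derivative_C_mul, ← dpow_succ', h]

end Leg

namespace Leg

lemma legendre_zero : legendre 0 = 1 := by
  unfold legendre; simp

lemma legendre_one : legendre 1 = X := by
  unfold legendre
  simp [pow_one, dpow_succ]
  rw [show (1 + 1 : ℝ[X]) = C 2 by rw [map_ofNat]; norm_num, Polynomial.smul_eq_C_mul, ← mul_assoc, ← C_mul]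
  norm_num

lemma dAl (l : ℕ) : C (l:ℝ) * derivative (A l) = C (l:ℝ) * legendre l := by
  cases l with
  | zero => simp
  | succ k => rw [A_deriv (k+1) (by omega)]

/-- (ii) -/
lemma idII (l : ℕ) : derivative (legendre (l+1))
    = X * derivative (legendre l) + C ((l:ℝ)+1) * legendre l := by
  have h := congrArg derivative (R1 l)
  rw [derivative_add, derivative_mul, derivative_X, derivative_C_mul] at h
  rw [h]
  rw [dAl l]
  simp only [map_add, map_one]
  ring

/-- (I2) -/
lemma idI2 (l : ℕ) : C ((l:ℝ)+1) * legendre (l+1)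
    = C ((l:ℝ)+1) * (X * legendre l) + (X^2-1) * derivative (legendre l) := by
  have h1 := R1 l
  have h2 := R2 l
  simp only [map_add, map_mul, map_one] at *
  linear_combination (C (l:ℝ) + 1) * h1 - h2

/-- (i) -/
lemma idI (l : ℕ) : X * derivative (legendre (l+1)) - derivative (legendre l)
    = C ((l:ℝ)+1) * legendre (l+1) := by
  have h1 := idII l
  have h2 := idI2 l
  linear_combination X * h1 - h2

/-- (b) -/
lemma idB (l : ℕ) : (X - 1) * (derivative (legendre (l+1)) + derivative (legendre l))
    = C ((l:ℝ)+1) * (legendre (l+1) - legendre l) := by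
  have h1 := idII l
  have h2 := idI l
  linear_combination h2 - h1

/-- (B2) -/
lemma idB2 (l : ℕ) : derivative (legendre (l+2)) - derivative (legendre l)
    = C (2*(l:ℝ)+3) * legendre (l+1) := by
  have h1 := idII (l+1)
  have h2 := idI l
  push_cast at h1
  simp only [map_add, map_mul, map_one, map_ofNat] at *
  linear_combination h1 + h2

lemma eval_A (l : ℕ) (hl : 1 ≤ l) (x : ℝ) (hx : x^2 = 1) : eval x (A l) = 0 := by
  have h := congrArg (eval x) (R2 l)
  simp only [eval_mul, eval_sub, eval_pow, eval_X, eval_one, eval_C] at h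
  rw [hx, sub_self, zero_mul] at h
  have hl' : (0:ℝ) < l := by exact_mod_cast hl
  have hll : ((l:ℝ)*((l:ℝ)+1)) ≠ 0 := by positivity
  rcases mul_eq_zero.mp h.symm with h' | h'
  · exact absurd h' hll
  · exact h'

lemma eval_one_legendre (l : ℕ) : eval 1 (legendre l) = 1 := by
  induction l with
  | zero => rw [legendre_zero]; simp
  | succ k ih =>
    rw [R1]
    simp only [eval_add, eval_mul, eval_X, eval_C, ih, one_mul]
    cases k with
    | zero => simp
    | succ m => rw [eval_A (m+1) (by omega) 1 (by norm_num)]; ring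

lemma eval_neg_one_legendre (l : ℕ) : eval (-1) (legendre l) = (-1)^l := by
  induction l with
  | zero => rw [legendre_zero]; simp
  | succ k ih =>
    rw [R1]
    simp only [eval_add, eval_mul, eval_X, eval_C, ih]
    cases k with
    | zero => simp
    | succ m => rw [eval_A (m+1) (by omega) (-1) (by norm_num)]; ring

end Leg

namespace Leg

noncomputable def Nn (l : ℕ) : ℝ := ∫ u in (0:ℝ)..1, (legendre l).eval (1 - 2*u^2)
noncomputable def Mm (l : ℕ) : ℝ := ∫ u in (0:ℝ)..1, (derivative (legendre l)).eval (1 - 2*u^2)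

lemma cont_comp (p : ℝ[X]) : Continuous (fun u : ℝ => p.eval (1 - 2*u^2)) := by
  exact (Polynomial.continuous p).comp (by continuity)

lemma hasDerivAt_comp (p : ℝ[X]) (u : ℝ) :
    HasDerivAt (fun u : ℝ => p.eval (1 - 2*u^2)) ((derivative p).eval (1-2*u^2) * (-4*u)) u := by
  have h2 : HasDerivAt (fun u : ℝ => 1 - 2*u^2) (-4*u) u := by
    have h0 := ((hasDerivAt_pow 2 u).const_mul 2).const_sub 1
    refine h0.congr_deriv ?_
    push_cast
    ring
  exact (Polynomial.hasDerivAt p (1-2*u^2)).comp u h2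

lemma N_rec (l : ℕ) : (2*(l:ℝ)+3) * Nn (l+1) = (2*(l:ℝ)+1) * Nn l := by
  have key : ∀ u ∈ Set.uIcc (0:ℝ) 1, HasDerivAt
      (fun u : ℝ => u * ((legendre (l+1)).eval (1-2*u^2) + (legendre l).eval (1-2*u^2)))
      ((2*(l:ℝ)+3) * (legendre (l+1)).eval (1-2*u^2) - (2*(l:ℝ)+1)*(legendre l).eval (1-2*u^2)) u := by
    intro u _
    have h := (hasDerivAt_id u).mul ((hasDerivAt_comp (legendre (l+1)) u).add (hasDerivAt_comp (legendre l) u))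
    have hb := congrArg (eval (1-2*u^2)) (idB l)
    simp only [eval_mul, eval_add, eval_sub, eval_X, eval_one, eval_C] at hb
    refine h.congr_deriv ?_
    simp only [id, Pi.add_apply]
    nlinarith [hb]
  have hint : IntervalIntegrable (fun u : ℝ => (2*(l:ℝ)+3) * (legendre (l+1)).eval (1-2*u^2) - (2*(l:ℝ)+1)*(legendre l).eval (1-2*u^2)) MeasureTheory.volume 0 1 := by
    exact ((continuous_const.mul (cont_comp (legendre (l+1)))).sub (continuous_const.mul (cont_comp (legendre l)))).intervalIntegrable 0 1
  have ftc := intervalIntegral.integral_eq_sub_of_hasDerivAt key hint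
  rw [show ((1:ℝ) - 2*1^2) = -1 by norm_num] at ftc
  rw [eval_neg_one_legendre, eval_neg_one_legendre, pow_succ] at ftc
  have hz : (-1:ℝ)^l * ((-1)^l * -1 + (-1)^l) - 0 * (eval (1 - 2 * 0 ^ 2) (legendre (l + 1)) + eval (1 - 2 * 0 ^ 2) (legendre l)) = 0 := by ring
  rw [show (1:ℝ) * ((-1:ℝ)^l * -1 + (-1)^l) = (-1:ℝ)^l * ((-1)^l * -1 + (-1)^l) - 0 by ring] at ftc
  have hsplit : (∫ u in (0:ℝ)..1, ((2*(l:ℝ)+3) * (legendre (l+1)).eval (1-2*u^2) - (2*(l:ℝ)+1)*(legendre l).eval (1-2*u^2)))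
      = (2*(l:ℝ)+3) * Nn (l+1) - (2*(l:ℝ)+1) * Nn l := by
    rw [intervalIntegral.integral_sub (((cont_comp (legendre (l+1))).intervalIntegrable 0 1).const_mul (2*(l:ℝ)+3))
      (((cont_comp (legendre l)).intervalIntegrable 0 1).const_mul (2*(l:ℝ)+1)),
      intervalIntegral.integral_const_mul, intervalIntegral.integral_const_mul]
    rfl
  rw [hsplit] at ftc
  linarith

lemma N_val (l : ℕ) : Nn l = 1/(2*(l:ℝ)+1) := by
  induction l with
  | zero =>
    simp [Nn, legendre_zero]
  | succ k ih =>
    have h := N_rec k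
    rw [ih] at h
    have h3 : (2*(k:ℝ)+3) ≠ 0 := by positivity
    have h1 : (2*(k:ℝ)+1) ≠ 0 := by positivity
    push_cast
    field_simp at h ⊢
    linarith

lemma M_rec (l : ℕ) : Mm (l+2) = Mm l + 1 := by
  have hpt : ∀ u : ℝ, (derivative (legendre (l+2))).eval (1-2*u^2)
      = (derivative (legendre l)).eval (1-2*u^2) + (2*(l:ℝ)+3) * (legendre (l+1)).eval (1-2*u^2) := by
    intro u
    have h := congrArg (eval (1-2*u^2)) (idB2 l)
    simp only [eval_sub, eval_mul, eval_add, eval_C] at h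
    linarith
  have : Mm (l+2) = ∫ u in (0:ℝ)..1, ((derivative (legendre l)).eval (1-2*u^2) + (2*(l:ℝ)+3) * (legendre (l+1)).eval (1-2*u^2)) := by
    unfold Mm
    congr 1
    ext u
    exact hpt u
  rw [this, intervalIntegral.integral_add ((cont_comp _).intervalIntegrable 0 1)
    (((cont_comp (legendre (l+1))).intervalIntegrable 0 1).const_mul (2*(l:ℝ)+3)),
    intervalIntegral.integral_const_mul]
  have : (∫ u in (0:ℝ)..1, (legendre (l+1)).eval (1-2*u^2)) = Nn (l+1) := rfl
  rw [this, N_val]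
  have : (∫ u in (0:ℝ)..1, (derivative (legendre l)).eval (1-2*u^2)) = Mm l := rfl
  rw [this]
  push_cast
  have h3 : (2*(l:ℝ)+3) ≠ 0 := by positivity
  field_simp
  ring

lemma M_val (l : ℕ) : Mm l = (2*(l:ℝ) + 1 - (-1)^l)/4 := by
  induction l using Nat.twoStepInduction with
  | zero => simp [Mm, legendre_zero]
  | one => simp [Mm, legendre_one]; norm_num
  | more k ih _ =>
    rw [M_rec k, ih]
    push_cast
    rw [pow_add]
    ring

end Leg

namespace Leg

noncomputable def qq (l : ℕ) : ℝ[X] := (legendre l).comp (1 - 2*X^2) - 1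

lemma eval_qq (l : ℕ) (u : ℝ) : eval u (qq l) = eval (1-2*u^2) (legendre l) - 1 := by
  unfold qq
  simp [eval_comp]

lemma deriv_qq (l : ℕ) : derivative (qq l)
    = (-4*X) * (derivative (legendre l)).comp (1 - 2*X^2) := by
  unfold qq
  rw [derivative_sub, derivative_one, derivative_comp, sub_zero]
  congr 1
  rw [derivative_sub, derivative_one, derivative_mul]
  simp [derivative_X_pow, map_ofNat]
  ring

lemma qq_coeff0 (l : ℕ) : (qq l).coeff 0 = 0 := by
  have : (qq l).coeff 0 = eval 0 (qq l) := by simp [Polynomial.coeff_zero_eq_eval_zero]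
  rw [this, eval_qq]
  norm_num [eval_one_legendre]

lemma qq_coeff1 (l : ℕ) : (qq l).coeff 1 = 0 := by
  have h : (derivative (qq l)).coeff 0 = (qq l).coeff 1 * 1 := by
    simpa using Polynomial.coeff_derivative (qq l) 0
  rw [deriv_qq] at h
  rw [mul_one] at h
  rw [← h, Polynomial.mul_coeff_zero]
  simp

lemma qq_div (l : ℕ) : ∃ R : ℝ[X], qq l = X^2 * R := by
  obtain ⟨q1, hq1⟩ := (Polynomial.X_dvd_iff).2 (qq_coeff0 l)
  have h1 : q1.coeff 0 = 0 := by
    have := qq_coeff1 l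
    rw [hq1, Polynomial.coeff_X_mul] at this
    exact this
  obtain ⟨R, hR⟩ := (Polynomial.X_dvd_iff).2 h1
  exact ⟨R, by rw [hq1, hR]; ring⟩

lemma R_key (l : ℕ) (R : ℝ[X]) (hR : qq l = X^2 * R) :
    R = (-4) * (derivative (legendre l)).comp (1 - 2*X^2) - derivative (X*R) := by
  have hd := congrArg derivative hR
  rw [deriv_qq, derivative_mul, derivative_X_pow] at hd
  norm_num [map_ofNat] at hd
  have hX : (X : ℝ[X]) * (2*R + X*derivative R + 4*((derivative (legendre l)).comp (1 - 2*X^2)))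
      = X * 0 := by
    rw [mul_zero]
    linear_combination -hd
  have h0 : (2*R + X*derivative R + 4*((derivative (legendre l)).comp (1 - 2*X^2))) = 0 :=
    mul_left_cancel₀ Polynomial.X_ne_zero hX
  rw [derivative_mul, derivative_X]
  linear_combination h0

lemma eval_S (l : ℕ) (u : ℝ) :
    eval u ((derivative (legendre l)).comp (1 - 2*X^2)) = eval (1-2*u^2) (derivative (legendre l)) := by
  simp [eval_comp]

lemma R_int (l : ℕ) (R : ℝ[X]) (hR : qq l = X^2 * R) :
    (∫ u in (0:ℝ)..1, eval u R) = -2*l := by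
  have hkey := R_key l R hR
  have hptw : ∀ u : ℝ, eval u R
      = -4 * eval (1-2*u^2) (derivative (legendre l)) - eval u (derivative (X*R)) := by
    intro u
    have := congrArg (eval u) hkey
    rw [eval_sub, eval_mul, eval_S] at this
    norm_num at this
    have h2 : eval u (derivative (X*R)) = eval u R + u * eval u (derivative R) := by
      rw [derivative_mul, derivative_X]
      simp
    rw [h2]
    linarith [this]
  have hsplit : (∫ u in (0:ℝ)..1, eval u R)
      = (∫ u in (0:ℝ)..1, (-4) * eval (1-2*u^2) (derivative (legendre l)))
        - (∫ u in (0:ℝ)..1, eval u (derivative (X*R))) := by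
    rw [← intervalIntegral.integral_sub
      (((cont_comp (derivative (legendre l))).intervalIntegrable 0 1).const_mul (-4))
      ((Polynomial.continuous _).intervalIntegrable 0 1)]
    apply intervalIntegral.integral_congr
    intro u _
    exact hptw u
  have hftc : (∫ u in (0:ℝ)..1, eval u (derivative (X*R))) = eval 1 (X*R) - eval 0 (X*R) :=
    intervalIntegral.integral_eq_sub_of_hasDerivAt
      (f := fun u : ℝ => eval u (X*R)) (f' := fun u : ℝ => eval u (derivative (X*R)))
      (fun u _ => Polynomial.hasDerivAt (X*R) u)
      ((Polynomial.continuous _).intervalIntegrable 0 1)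
  have hM : (∫ u in (0:ℝ)..1, (-4) * eval (1-2*u^2) (derivative (legendre l))) = -4 * Mm l := by
    rw [intervalIntegral.integral_const_mul]
    rfl
  have hR1 : eval 1 (X*R) = (-1)^l - 1 := by
    have := eval_qq l 1
    rw [hR] at this
    simp only [eval_mul, eval_pow, eval_X, one_pow, one_mul] at this
    rw [show (1:ℝ)-2*1 = -1 by norm_num, eval_neg_one_legendre] at this
    simp [this]
  have hR0 : eval 0 (X*R) = 0 := by simp
  rw [hsplit, hftc, hM, hR1, hR0, M_val]
  push_cast
  ring

end Leg

namespace Leg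

lemma hasDerivAt_phi (u : ℝ) : HasDerivAt (fun u : ℝ => 1 - 2*u^2) (-4*u) u := by
  have h0 := ((hasDerivAt_pow 2 u).const_mul 2).const_sub 1
  refine h0.congr_deriv ?_
  push_cast
  ring

lemma main_int (l : ℕ) :
    (∫ t in (-1:ℝ)..1, ((legendre l).eval t - 1) * (1 - t) ^ (-(3:ℝ)/2))
      = -(2:ℝ)^((3:ℝ)/2) * l := by
  obtain ⟨R, hR⟩ := qq_div l
  set g : ℝ → ℝ := fun t => ((legendre l).eval t - 1) * (1 - t) ^ (-(3:ℝ)/2) with hg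
  set c : ℝ := (2:ℝ)^((3:ℝ)/2) with hc
  have hcpos : 0 < c := Real.rpow_pos_of_pos (by norm_num) _
  have hc2 : c * c = 8 := by
    rw [hc, ← Real.rpow_add (by norm_num : (0:ℝ) < 2)]
    rw [show (3:ℝ)/2 + 3/2 = ((3:ℕ):ℝ) by norm_num, Real.rpow_natCast]
    norm_num
  have h1 : (∫ t in (-1:ℝ)..1, g t) = ∫ t in Set.Ioo (-1:ℝ) 1, g t := by
    rw [intervalIntegral.integral_of_le (by norm_num), MeasureTheory.integral_Ioc_eq_integral_Ioo]
  have himg : (fun u:ℝ => 1-2*u^2) '' (Set.Ioo 0 1) = Set.Ioo (-1:ℝ) 1 := by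
    ext t
    constructor
    · rintro ⟨u, hu, rfl⟩
      simp only [Set.mem_Ioo] at hu ⊢
      constructor <;> nlinarith [hu.1, hu.2]
    · intro ht
      refine ⟨Real.sqrt ((1-t)/2), ⟨?_, ?_⟩, ?_⟩
      · have ht2 : t < 1 := ht.2
        exact Real.sqrt_pos.2 (by nlinarith)
      · have ht1 : -1 < t := ht.1
        exact (Real.sqrt_lt' one_pos).2 (by nlinarith)
      · simp only []
        rw [Real.sq_sqrt (by nlinarith [ht.2] : (0:ℝ) ≤ (1-t)/2)]
        ring
  have hderiv : ∀ u ∈ Set.Ioo (0:ℝ) 1,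
      HasDerivWithinAt (fun u:ℝ => 1-2*u^2) (-4*u) (Set.Ioo 0 1) u :=
    fun u _ => (hasDerivAt_phi u).hasDerivWithinAt
  have hinj : Set.InjOn (fun u:ℝ => 1-2*u^2) (Set.Ioo 0 1) := by
    intro a ha b hb h
    simp only [] at h
    have h2 : a^2 = b^2 := by nlinarith
    rw [← Real.sqrt_sq ha.1.le, ← Real.sqrt_sq hb.1.le, h2]
  have hcov := MeasureTheory.integral_image_eq_integral_abs_deriv_smul
    measurableSet_Ioo hderiv hinj g
  rw [himg] at hcov
  have heq : Set.EqOn (fun u => |(-4*u)| • g (1-2*u^2)) (fun u => (4/c) * eval u R)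
      (Set.Ioo (0:ℝ) 1) := by
    intro u hu
    have hu0 : 0 < u := hu.1
    simp only [smul_eq_mul]
    have habs : |(-4*u)| = 4*u := by
      rw [abs_of_nonpos (by linarith : -4*u ≤ 0)]
      ring
    have hsub : (1:ℝ) - (1-2*u^2) = 2*u^2 := by ring
    have hq : (legendre l).eval (1-2*u^2) - 1 = u^2 * eval u R := by
      have := eval_qq l u
      rw [hR] at this
      simp only [eval_mul, eval_pow, eval_X] at this
      linarith [this]
    have e2 : (2*u^2:ℝ)^((3:ℝ)/2) = c * u^3 := by
      rw [Real.mul_rpow (by norm_num) (by positivity)]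
      congr 1
      rw [← Real.rpow_natCast u 2, ← Real.rpow_mul hu0.le]
      rw [show ((2:ℕ):ℝ)*((3:ℝ)/2) = ((3:ℕ):ℝ) by push_cast; ring, Real.rpow_natCast]
    have e1 : (2*u^2:ℝ)^(-(3:ℝ)/2) = (c * u^3)⁻¹ := by
      rw [show (-(3:ℝ)/2) = -((3:ℝ)/2) by ring, Real.rpow_neg (by positivity), e2]
    rw [hg]
    simp only []
    rw [habs, hsub, hq, e1]
    have hu3 : u^3 ≠ 0 := by positivity
    field_simp
  rw [MeasureTheory.setIntegral_congr_fun measurableSet_Ioo heq] at hcov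
  have h2 : (∫ u in Set.Ioo (0:ℝ) 1, (4/c) * eval u R) = (4/c) * (-2*(l:ℝ)) := by
    rw [MeasureTheory.integral_const_mul, ← MeasureTheory.integral_Ioc_eq_integral_Ioo,
      ← intervalIntegral.integral_of_le (by norm_num : (0:ℝ) ≤ 1), R_int l R hR]
  rw [h1, hcov, h2]
  have : c^2 = 8 := by rw [sq]; exact hc2
  field_simp
  nlinarith [this, hcpos]

end Leg


/-- `∫_{−1}^{1} (P_ℓ(t) − 1)·(1−t)^{−3/2} dt = −2^{3/2}·ℓ`; equivalently, for `α = −1/2`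
and `δ = 2` the eigenvalue of the nonlocal Laplace–Beltrami operator is `λ_2(ℓ) = −2ℓ`. -/
theorem eigenvalue_whole_sphere (l : ℕ) :
    (∫ t in (-1 : ℝ)..1, ((legendre l).eval t - 1) * (1 - t) ^ (-(3 : ℝ) / 2))
        = -(2 : ℝ) ^ ((3 : ℝ) / 2) * l ∧
      lambdaNL (-1 / 2) 2 l = -2 * l := by

  refine ⟨Leg.main_int l, ?_⟩
  unfold lambdaNL
  norm_num
  have hcong : Set.EqOn
      (fun t : ℝ => (Polynomial.eval t (legendre l) - 1) * (1 / 2 * (2:ℝ) ^ ((1:ℝ) / 2) / (π * 2 * (1 - t) ^ ((3:ℝ) / 2))))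
      (fun t : ℝ => ((2:ℝ)^((1:ℝ)/2)/(4*π)) * ((Polynomial.eval t (legendre l) - 1) * (1-t)^(-(3:ℝ)/2)))
      (Set.uIcc (-1:ℝ) 1) := by
    intro t ht
    rw [Set.uIcc_of_le (by norm_num : (-1:ℝ) ≤ 1), Set.mem_Icc] at ht
    have h1t : (0:ℝ) ≤ 1 - t := by linarith [ht.2]
    simp only []
    rw [show (-(3:ℝ)/2) = -((3:ℝ)/2) by ring, Real.rpow_neg h1t]
    rcases eq_or_ne ((1-t)^((3:ℝ)/2)) 0 with h | h
    · rw [h]; simp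
    · field_simp
      ring
  rw [intervalIntegral.integral_congr hcong, intervalIntegral.integral_const_mul, Leg.main_int l]
  have h4 : (2:ℝ)^((1:ℝ)/2) * (2:ℝ)^((3:ℝ)/2) = 4 := by
    rw [← Real.rpow_add (by norm_num : (0:ℝ) < 2)]
    rw [show (1:ℝ)/2 + 3/2 = ((2:ℕ):ℝ) by norm_num, Real.rpow_natCast]
    norm_num
  field_simp
  linear_combination (-(l:ℝ)) * h4
end

section
/- Let α, β > −1 and let μ_ℓ^{(α,β)} = ∫_{−1}^{1} T_ℓ(x)·(1−x)^α·(1+x)^β dx be the modified Chebyshev moments of the Jacobi weight. Then for every natural number ℓ ≥ 1, the three-term recurrence (α+β+ℓ+2)·μ_{ℓ+1}^{(α,β)} + 2(α−β)·μ_ℓ^{(α,β)} + (α+β−ℓ+2)·μ_{ℓ−1}^{(α,β)} = 0 holds. -/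
open MeasureTheory Real Polynomial

/-- The modified Chebyshev moments of the Jacobi weight `(1-x)^α (1+x)^β`. -/
noncomputable def chebMoment (α β : ℝ) (l : ℕ) : ℝ :=
  ∫ x in (-1 : ℝ)..1, (Polynomial.Chebyshev.T ℝ (l : ℤ)).eval x * (1 - x) ^ α * (1 + x) ^ β

lemma weight_integrable {α β : ℝ} (hα : -1 < α) (hβ : -1 < β) :
    IntervalIntegrable (fun x => (1 - x) ^ α * (1 + x) ^ β) volume (-1) 1 := by
  have hc1 : ContinuousOn (fun x : ℝ => (1 - x) ^ α) (Set.uIcc (-1 : ℝ) 0) := by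
    apply ContinuousOn.rpow_const (by fun_prop)
    intro x hx
    rw [Set.uIcc_of_le (by norm_num)] at hx
    left; have := hx.2; nlinarith
  have hc2 : ContinuousOn (fun x : ℝ => (1 + x) ^ β) (Set.uIcc (0 : ℝ) 1) := by
    apply ContinuousOn.rpow_const (by fun_prop)
    intro x hx
    rw [Set.uIcc_of_le (by norm_num)] at hx
    left; have := hx.1; nlinarith
  have h1 : IntervalIntegrable (fun x : ℝ => (1 + x) ^ β) volume (-1) 0 := by
    have h := (intervalIntegral.intervalIntegrable_rpow' (a := 0) (b := 1) hβ).comp_add_right 1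
    simp only [zero_sub, sub_self] at h
    have he : (fun x : ℝ => (1 + x) ^ β) = fun x : ℝ => (x + 1) ^ β := by
      funext x; rw [add_comm]
    rw [he]; exact h
  have h2 : IntervalIntegrable (fun x : ℝ => (1 - x) ^ α) volume 0 1 := by
    have := (intervalIntegral.intervalIntegrable_rpow' (a := 0) (b := 1) hα).comp_sub_left 1
    simp only [sub_zero, sub_self] at this
    exact this.symm
  have I1 : IntervalIntegrable (fun x : ℝ => (1 - x) ^ α * (1 + x) ^ β) volume (-1) 0 :=
    h1.continuousOn_mul hc1
  have I2 : IntervalIntegrable (fun x : ℝ => (1 - x) ^ α * (1 + x) ^ β) volume 0 1 :=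
    h2.mul_continuousOn hc2
  exact I1.trans I2

lemma poly_weight_integrable {α β : ℝ} (hα : -1 < α) (hβ : -1 < β) (p : ℝ[X]) :
    IntervalIntegrable (fun x => p.eval x * ((1 - x) ^ α * (1 + x) ^ β)) volume (-1) 1 :=
  (weight_integrable hα hβ).continuousOn_mul (p.continuous_aeval.continuousOn)

/-- Three-term recurrence relation for the modified Chebyshev moments of the Jacobi weight. -/
theorem chebMoment_recurrence (α β : ℝ) (hα : -1 < α) (hβ : -1 < β) (l : ℕ) (hl : 1 ≤ l) :
    (α + β + (l : ℝ) + 2) * chebMoment α β (l + 1) + 2 * (α - β) * chebMoment α β l +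
      (α + β - (l : ℝ) + 2) * chebMoment α β (l - 1) = 0 := by
  set n : ℤ := (l : ℤ) with hn
  -- the three Chebyshev polynomials involved
  set P : ℝ[X] := Polynomial.Chebyshev.T ℝ n with hP
  set Pp : ℝ[X] := Polynomial.Chebyshev.T ℝ (n + 1) with hPp
  set Pm : ℝ[X] := Polynomial.Chebyshev.T ℝ (n - 1) with hPm
  -- the function whose derivative we integrate
  set Q : ℝ → ℝ := fun x =>
    (((β + 1) * (1 - x) - (α + 1) * (1 + x)) * P.eval x
      + (1 - x) * (1 + x) * (derivative P).eval x) with hQ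
  set F : ℝ → ℝ := fun x => (1 - x) ^ (α + 1) * ((1 + x) ^ (β + 1) * P.eval x) with hF
  set D : ℝ → ℝ := fun x => Q x * ((1 - x) ^ α * (1 + x) ^ β) with hD
  have hQcont : Continuous Q := by
    apply Continuous.add
    · exact (Continuous.sub (by fun_prop) (by fun_prop)).mul P.continuous_aeval
    · exact (Continuous.mul (by fun_prop) (by fun_prop)).mul (derivative P).continuous_aeval
  -- F is continuous on [-1, 1]
  have hr1 : Continuous fun x : ℝ => (1 - x) ^ (α + 1) := by
    rw [continuous_iff_continuousAt]
    intro x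
    exact (Real.continuousAt_rpow_const _ _ (Or.inr (by linarith))).comp
      ((continuous_const.sub continuous_id).continuousAt)
  have hr2 : Continuous fun x : ℝ => (1 + x) ^ (β + 1) := by
    rw [continuous_iff_continuousAt]
    intro x
    exact (Real.continuousAt_rpow_const _ _ (Or.inr (by linarith))).comp
      ((continuous_const.add continuous_id).continuousAt)
  have hFcont : ContinuousOn F (Set.Icc (-1 : ℝ) 1) :=
    (hr1.mul (hr2.mul P.continuous_aeval)).continuousOn
  -- derivative of F on the open interval
  have hderiv : ∀ x ∈ Set.Ioo (-1 : ℝ) 1, HasDerivAt F (D x) x := by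
    intro x hx
    have hx1 : (0 : ℝ) < 1 - x := by linarith [hx.2]
    have hx2 : (0 : ℝ) < 1 + x := by linarith [hx.1]
    have inner1 : HasDerivAt (fun y : ℝ => 1 - y) (-1) x := (hasDerivAt_id x).const_sub 1
    have inner2 : HasDerivAt (fun y : ℝ => 1 + y) 1 x := (hasDerivAt_id x).const_add 1
    have d1 : HasDerivAt (fun y : ℝ => (1 - y) ^ (α + 1)) (-((α + 1) * (1 - x) ^ α)) x := by
      have h := (Real.hasDerivAt_rpow_const (x := 1 - x) (p := α + 1)
        (Or.inl hx1.ne')).comp x inner1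
      refine h.congr_deriv ?_
      rw [show α + 1 - 1 = α by ring]; ring
    have d2 : HasDerivAt (fun y : ℝ => (1 + y) ^ (β + 1)) ((β + 1) * (1 + x) ^ β) x := by
      have h := (Real.hasDerivAt_rpow_const (x := 1 + x) (p := β + 1)
        (Or.inl hx2.ne')).comp x inner2
      refine h.congr_deriv ?_
      rw [show β + 1 - 1 = β by ring]; ring
    have d3 : HasDerivAt (fun y : ℝ => P.eval y) ((derivative P).eval x) x := P.hasDerivAt x
    have h := d1.mul (d2.mul d3)
    have e1 : (1 - x) ^ (α + 1) = (1 - x) ^ α * (1 - x) := Real.rpow_add_one hx1.ne' α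
    have e2 : (1 + x) ^ (β + 1) = (1 + x) ^ β * (1 + x) := Real.rpow_add_one hx2.ne' β
    refine h.congr_deriv ?_
    simp only [hD, hQ, Pi.mul_apply]
    rw [e1, e2]; ring
  -- D is interval integrable
  have hDint : IntervalIntegrable D volume (-1) 1 :=
    (weight_integrable hα hβ).continuousOn_mul hQcont.continuousOn
  -- the integral of D vanishes
  have key : (∫ x in (-1 : ℝ)..1, D x) = 0 := by
    rw [intervalIntegral.integral_eq_sub_of_hasDeriv_right_of_le (by norm_num) hFcont
      (fun x hx => (hderiv x hx).hasDerivWithinAt) hDint]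
    have hα1 : α + 1 ≠ 0 := by linarith
    have hβ1 : β + 1 ≠ 0 := by linarith
    simp [hF, Real.zero_rpow hα1, Real.zero_rpow hβ1]
  -- the pointwise identity expressing Q in terms of Chebyshev polynomials
  have hQid : ∀ x : ℝ, Q x = (-(α + β + (l : ℝ) + 2) / 2) * Pp.eval x + (β - α) * P.eval x
      + (-(α + β - (l : ℝ) + 2) / 2) * Pm.eval x := by
    intro x
    have h1 := congrArg (Polynomial.eval x)
      (Polynomial.Chebyshev.one_sub_X_sq_mul_derivative_T_eq_poly_in_T (R := ℝ) (n - 1))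
    have h2 := congrArg (Polynomial.eval x) (Polynomial.Chebyshev.T_mul_T ℝ 1 n)
    rw [show n - 1 + 1 = n from by ring] at h1
    have hT1 : Polynomial.Chebyshev.T ℝ 1 = X := Polynomial.Chebyshev.T_one ℝ
    have hTneg : Polynomial.Chebyshev.T ℝ (1 - n) = Polynomial.Chebyshev.T ℝ (n - 1) := by
      rw [show (1 : ℤ) - n = -(n - 1) from by ring, Polynomial.Chebyshev.T_neg]
    rw [hT1, hTneg] at h2
    simp only [Polynomial.eval_mul, Polynomial.eval_add, Polynomial.eval_sub, Polynomial.eval_one,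
      Polynomial.eval_X, Polynomial.eval_pow, Polynomial.eval_intCast, Polynomial.eval_ofNat] at h1 h2
    have hcast : ((n - 1 : ℤ) : ℝ) + 1 = (l : ℝ) := by push_cast [hn]; ring
    rw [show (1 : ℤ) + n = n + 1 from by ring] at h2
    rw [← hPm] at h1
    rw [← hPp, ← hPm] at h2
    simp only [hQ]
    push_cast [hn] at h1
    linear_combination h1 - ((α + β + (l : ℝ) + 2) / 2) * h2
  -- rewrite the integral of D as a combination of moments
  have hmom : ∀ k : ℕ, chebMoment α β k
      = ∫ x in (-1 : ℝ)..1, (Polynomial.Chebyshev.T ℝ (k : ℤ)).eval x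
          * ((1 - x) ^ α * (1 + x) ^ β) := by
    intro k
    simp only [chebMoment, mul_assoc]
  have hintp : IntervalIntegrable
      (fun x => Pp.eval x * ((1 - x) ^ α * (1 + x) ^ β)) volume (-1) 1 :=
    poly_weight_integrable hα hβ _
  have hint0 : IntervalIntegrable
      (fun x => P.eval x * ((1 - x) ^ α * (1 + x) ^ β)) volume (-1) 1 :=
    poly_weight_integrable hα hβ _
  have hintm : IntervalIntegrable
      (fun x => Pm.eval x * ((1 - x) ^ α * (1 + x) ^ β)) volume (-1) 1 :=
    poly_weight_integrable hα hβ _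
  have hsplit : (∫ x in (-1 : ℝ)..1, D x)
      = (-(α + β + (l : ℝ) + 2) / 2) * (∫ x in (-1 : ℝ)..1, Pp.eval x * ((1 - x) ^ α * (1 + x) ^ β))
      + (β - α) * (∫ x in (-1 : ℝ)..1, P.eval x * ((1 - x) ^ α * (1 + x) ^ β))
      + (-(α + β - (l : ℝ) + 2) / 2) * (∫ x in (-1 : ℝ)..1, Pm.eval x * ((1 - x) ^ α * (1 + x) ^ β)) := by
    have hDeq : D = fun x => -(α + β + (l : ℝ) + 2) / 2 * (Pp.eval x * ((1 - x) ^ α * (1 + x) ^ β))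
        + (β - α) * (P.eval x * ((1 - x) ^ α * (1 + x) ^ β))
        + -(α + β - (l : ℝ) + 2) / 2 * (Pm.eval x * ((1 - x) ^ α * (1 + x) ^ β)) := by
      funext x
      simp only [hD]
      rw [hQid x]
      ring
    rw [hDeq,
      intervalIntegral.integral_add ((hintp.const_mul _).add (hint0.const_mul _)) (hintm.const_mul _),
      intervalIntegral.integral_add (hintp.const_mul _) (hint0.const_mul _),
      intervalIntegral.integral_const_mul, intervalIntegral.integral_const_mul,
      intervalIntegral.integral_const_mul]
  -- identify the moments
  have hmp : chebMoment α β (l + 1)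
      = ∫ x in (-1 : ℝ)..1, Pp.eval x * ((1 - x) ^ α * (1 + x) ^ β) := by
    rw [hmom]
    have : ((l + 1 : ℕ) : ℤ) = n + 1 := by push_cast [hn]; ring
    rw [this, ← hPp]
  have hm0 : chebMoment α β l
      = ∫ x in (-1 : ℝ)..1, P.eval x * ((1 - x) ^ α * (1 + x) ^ β) := by
    rw [hmom, ← hn, ← hP]
  have hmm : chebMoment α β (l - 1)
      = ∫ x in (-1 : ℝ)..1, Pm.eval x * ((1 - x) ^ α * (1 + x) ^ β) := by
    rw [hmom]
    have : ((l - 1 : ℕ) : ℤ) = n - 1 := by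
      rw [hn]; push_cast [hl]; ring
    rw [this, ← hPm]
  rw [hmp, hm0, hmm]
  rw [hsplit] at key
  linarith
end

section
/- Let ℓ ≥ 1 be a natural number, let w : [−1,1] → ℝ be a continuous weight function, let x_k = cos(kπ/ℓ) for 0 ≤ k ≤ ℓ be the Chebyshev–Lobatto points, and let μ_k = ∫_{−1}^{1} T_k(x)·w(x) dx for 0 ≤ k ≤ ℓ be the modified Chebyshev moments. Define the quadrature weights w_j = ((1 − (δ_{0,j} + δ_{ℓ,j})/2)/ℓ)·[μ_0 + (−1)^j·μ_ℓ + 2·∑_{k=1}^{ℓ−1} μ_k·cos(πjk/ℓ)] for 0 ≤ j ≤ ℓ, where δ_{k,j} is the Kronecker delta. Then ∫_{−1}^{1} f(x)·w(x) dx = ∑_{j=0}^{ℓ} w_j·f(x_j) for every polynomial f of degree at most ℓ. -/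
open MeasureTheory Real Polynomial Finset

private lemma ccq_cos_mul_cos (x y : ℝ) :
    Real.cos x * Real.cos y = (Real.cos (x + y) + Real.cos (x - y)) / 2 := by
  rw [Real.cos_add, Real.cos_sub]; ring

private lemma ccq_sum_cos_full (l : ℕ) (hl : 1 ≤ l) (n : ℤ) :
    ∑ j ∈ range (2 * l), Real.cos (π * j * n / l) =
      if (2 * (l : ℤ)) ∣ n then (2 * l : ℝ) else 0 := by
  have hl0 : (l : ℝ) ≠ 0 := Nat.cast_ne_zero.mpr (by omega)
  by_cases hdvd : (2 * (l : ℤ)) ∣ n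
  · obtain ⟨t, ht⟩ := hdvd
    rw [if_pos ⟨t, ht⟩]
    have h1 : ∀ j ∈ range (2 * l), Real.cos (π * j * n / l) = 1 := by
      intro j _
      have : π * j * n / l = ((j : ℤ) * t : ℤ) * (2 * π) := by
        push_cast [ht]; field_simp
      rw [this, Real.cos_int_mul_two_pi]
    rw [Finset.sum_congr rfl h1]
    simp
  · rw [if_neg hdvd]
    set z : ℂ := Complex.exp ((π * n / l : ℝ) * Complex.I) with hz
    have hzj : ∀ j : ℕ, z ^ j = Complex.exp ((π * j * n / l : ℝ) * Complex.I) := by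
      intro j
      rw [hz, ← Complex.exp_nat_mul]
      congr 1
      push_cast
      ring
    have hre : ∀ j : ℕ, Real.cos (π * j * n / l) = (z ^ j).re := by
      intro j
      rw [hzj j, Complex.exp_ofReal_mul_I_re]
    have hz1 : z ≠ 1 := by
      intro h
      rw [hz, Complex.exp_eq_one_iff] at h
      obtain ⟨m, hm⟩ := h
      have him : (π * n / l : ℝ) = m * (2 * π) := by
        have := congrArg Complex.im hm
        simpa using this
      apply hdvd
      refine ⟨m, ?_⟩
      have hπ : (π : ℝ) ≠ 0 := Real.pi_ne_zero
      field_simp at him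
      have h2 : π * (n : ℝ) = π * (2 * l * m) := by linear_combination π * him
      have h3 := mul_left_cancel₀ hπ h2
      exact_mod_cast h3
    have hztop : z ^ (2 * l) = 1 := by
      rw [hzj (2 * l)]
      have : (π * (2 * l : ℕ) * n / l : ℝ) = (n : ℝ) * (2 * π) := by
        push_cast; field_simp
      rw [this]
      have := Complex.exp_int_mul_two_pi_mul_I n
      rw [← this]
      congr 1
      push_cast
      ring
    calc ∑ j ∈ range (2 * l), Real.cos (π * j * n / l)
        = ∑ j ∈ range (2 * l), (z ^ j).re := Finset.sum_congr rfl (fun j _ => hre j)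
      _ = (∑ j ∈ range (2 * l), z ^ j).re := by rw [Complex.re_sum]
      _ = 0 := by rw [geom_sum_eq hz1, hztop]; simp

private lemma ccq_range_decomp (l : ℕ) (hl : 1 ≤ l) :
    range (l + 1) = insert 0 (insert l (Ioo 0 l)) := by
  ext j
  simp only [Finset.mem_range, Finset.mem_insert, Finset.mem_Ioo]
  omega

private lemma ccq_sum_cos_half (l : ℕ) (hl : 1 ≤ l) (n : ℤ) :
    ∑ j ∈ range (l + 1),
      (1 - ((if j = 0 then (1 : ℝ) else 0) + (if j = l then (1 : ℝ) else 0)) / 2) *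
        Real.cos (π * j * n / l)
      = if (2 * (l : ℤ)) ∣ n then (l : ℝ) else 0 := by
  set c : ℕ → ℝ := fun j => Real.cos (π * j * n / l) with hc
  have h0 : (0 : ℕ) ∉ insert l (Ioo 0 l) := by
    simp only [Finset.mem_insert, Finset.mem_Ioo]
    omega
  have hli : l ∉ Ioo 0 l := by simp
  have hdec := ccq_range_decomp l hl
  have hmirror : ∑ j ∈ Ico (l + 1) (2 * l), c j = ∑ j ∈ Ioo 0 l, c j := by
    apply Finset.sum_nbij' (i := fun j => 2 * l - j) (j := fun i => 2 * l - i)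
    · intro a ha
      simp only [Finset.mem_Ico] at ha
      simp only [Finset.mem_Ioo]
      omega
    · intro a ha
      simp only [Finset.mem_Ioo] at ha
      simp only [Finset.mem_Ico]
      omega
    · intro a ha
      simp only [Finset.mem_Ico] at ha
      omega
    · intro a ha
      simp only [Finset.mem_Ioo] at ha
      omega
    · intro a ha
      simp only [Finset.mem_Ico] at ha
      have hcast : ((2 * l - a : ℕ) : ℝ) = 2 * l - a := by
        push_cast [Nat.cast_sub (by omega : a ≤ 2 * l)]
        ring
      have hl0 : (l : ℝ) ≠ 0 := Nat.cast_ne_zero.mpr (by omega)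
      have harg : π * ((2 * l - a : ℕ) : ℝ) * n / l = (n : ℝ) * (2 * π) - π * a * n / l := by
        rw [hcast]; field_simp
      show c a = c (2 * l - a)
      simp only [hc]
      rw [harg, Real.cos_int_mul_two_pi_sub]
  have hsplit : ∑ j ∈ range (2 * l), c j
      = ∑ j ∈ range (l + 1), c j + ∑ j ∈ Ioo 0 l, c j := by
    rw [range_eq_Ico, ← Finset.sum_Ico_consecutive _ (Nat.zero_le (l + 1)) (by omega : l + 1 ≤ 2 * l),
      ← range_eq_Ico, hmirror]
  have hS1 : ∑ j ∈ range (l + 1), c j = c 0 + c l + ∑ j ∈ Ioo 0 l, c j := by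
    rw [hdec, Finset.sum_insert h0, Finset.sum_insert hli]
    ring
  have hLHS : ∑ j ∈ range (l + 1),
      (1 - ((if j = 0 then (1 : ℝ) else 0) + (if j = l then (1 : ℝ) else 0)) / 2) * c j
      = c 0 / 2 + c l / 2 + ∑ j ∈ Ioo 0 l, c j := by
    rw [hdec, Finset.sum_insert h0, Finset.sum_insert hli]
    rw [if_pos rfl, if_neg (by omega : ¬(0 = l)), if_pos rfl, if_neg (by omega : ¬(l = 0))]
    have : ∀ j ∈ Ioo 0 l,
        (1 - ((if j = 0 then (1 : ℝ) else 0) + (if j = l then (1 : ℝ) else 0)) / 2) * c j = c j := by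
      intro j hj
      simp only [Finset.mem_Ioo] at hj
      rw [if_neg (by omega), if_neg (by omega)]
      ring
    rw [Finset.sum_congr rfl this]
    ring
  have hF := ccq_sum_cos_full l hl n
  rw [hLHS]
  rw [hsplit, hS1] at hF
  by_cases hdvd : (2 * (l : ℤ)) ∣ n
  · rw [if_pos hdvd] at hF ⊢
    linarith
  · rw [if_neg hdvd] at hF ⊢
    linarith

private lemma ccq_orth (l : ℕ) (hl : 1 ≤ l) (k m : ℕ) (hk : k ≤ l) (hm : m ≤ l) :
    ∑ j ∈ range (l + 1),
      (1 - ((if j = 0 then (1 : ℝ) else 0) + (if j = l then (1 : ℝ) else 0)) / 2) *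
        (Real.cos (π * j * k / l) * Real.cos (π * j * m / l))
      = if k = m then (if k = 0 ∨ k = l then (l : ℝ) else (l : ℝ) / 2) else 0 := by
  have hterm : ∀ j ∈ range (l + 1),
      (1 - ((if j = 0 then (1 : ℝ) else 0) + (if j = l then (1 : ℝ) else 0)) / 2) *
        (Real.cos (π * j * k / l) * Real.cos (π * j * m / l))
      = ((1 - ((if j = 0 then (1 : ℝ) else 0) + (if j = l then (1 : ℝ) else 0)) / 2) *
          Real.cos (π * j * (((k : ℤ) + m : ℤ) : ℝ) / l)
        + (1 - ((if j = 0 then (1 : ℝ) else 0) + (if j = l then (1 : ℝ) else 0)) / 2) *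
          Real.cos (π * j * (((k : ℤ) - m : ℤ) : ℝ) / l)) / 2 := by
    intro j _
    rw [ccq_cos_mul_cos]
    have h1 : π * j * k / l + π * j * m / l = π * j * (((k : ℤ) + m : ℤ) : ℝ) / l := by
      push_cast; ring
    have h2 : π * j * k / l - π * j * m / l = π * j * (((k : ℤ) - m : ℤ) : ℝ) / l := by
      push_cast; ring
    rw [h1, h2]
    ring
  rw [Finset.sum_congr rfl hterm, ← Finset.sum_div, Finset.sum_add_distrib,
    ccq_sum_cos_half l hl ((k : ℤ) + m), ccq_sum_cos_half l hl ((k : ℤ) - m)]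
  have hl1 : (1 : ℤ) ≤ l := by exact_mod_cast hl
  have hks : (k : ℤ) ≤ l := by exact_mod_cast hk
  have hms : (m : ℤ) ≤ l := by exact_mod_cast hm
  by_cases hkm : k = m
  · subst hkm
    have hd2 : (2 * (l : ℤ)) ∣ ((k : ℤ) - k) := ⟨0, by ring⟩
    rw [if_pos hd2, if_pos rfl]
    by_cases hk0 : k = 0 ∨ k = l
    · have hd1 : (2 * (l : ℤ)) ∣ ((k : ℤ) + k) := by
        rcases hk0 with h | h <;> subst h
        · exact ⟨0, by ring⟩
        · exact ⟨1, by ring⟩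
      rw [if_pos hd1, if_pos hk0]
      ring
    · have hd1 : ¬ (2 * (l : ℤ)) ∣ ((k : ℤ) + k) := by
        rintro ⟨t, ht⟩
        push_neg at hk0
        have hk0' : 0 < (k : ℤ) := by
          have : k ≠ 0 := hk0.1
          omega
        have hkl : (k : ℤ) < l := by
          have : k ≠ l := hk0.2
          omega
        have ht0 : 0 < t := by nlinarith
        have ht1 : t < 1 := by nlinarith
        omega
      rw [if_neg hd1, if_neg hk0]
      ring
  · have hkm' : (k : ℤ) ≠ m := by exact_mod_cast hkm
    have hd2 : ¬ (2 * (l : ℤ)) ∣ ((k : ℤ) - m) := by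
      rintro ⟨t, ht⟩
      have ht0 : t = 0 := by nlinarith [Int.natCast_nonneg k, Int.natCast_nonneg m]
      rw [ht0, mul_zero] at ht
      omega
    have hd1 : ¬ (2 * (l : ℤ)) ∣ ((k : ℤ) + m) := by
      rintro ⟨t, ht⟩
      have hk0 : 0 ≤ (k : ℤ) := Int.natCast_nonneg k
      have hm0 : 0 ≤ (m : ℤ) := Int.natCast_nonneg m
      have ht0 : 0 ≤ t := by nlinarith
      have ht1 : t ≤ 1 := by nlinarith
      interval_cases t <;> omega
    rw [if_neg hd1, if_neg hd2, if_neg hkm]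
    ring

private lemma ccq_key (l : ℕ) (hl : 1 ≤ l) (μ W : ℕ → ℝ)
    (hW : ∀ j : ℕ, W j =
      (1 - ((if j = 0 then (1 : ℝ) else 0) + (if j = l then (1 : ℝ) else 0)) / 2) / (l : ℝ) *
        (μ 0 + (-1 : ℝ) ^ j * μ l +
          2 * ∑ k ∈ Finset.Ioo 0 l, μ k * Real.cos (π * (j : ℝ) * (k : ℝ) / (l : ℝ))))
    (m : ℕ) (hm : m ≤ l) :
    ∑ j ∈ range (l + 1), W j * Real.cos (π * j * m / l) = μ m := by
  have hl0 : (l : ℝ) ≠ 0 := Nat.cast_ne_zero.mpr (by omega)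
  have h0 : (0 : ℕ) ∉ insert l (Ioo 0 l) := by
    simp only [Finset.mem_insert, Finset.mem_Ioo]
    omega
  have hli : l ∉ Ioo 0 l := by simp
  have hcosj : ∀ j : ℕ, Real.cos (π * j * (l : ℝ) / l) = (-1 : ℝ) ^ j := by
    intro j
    have harg : π * j * (l : ℝ) / l = (j : ℝ) * π - 0 := by field_simp; ring
    rw [harg, Real.cos_nat_mul_pi_sub]
    simp
  have hA : ∀ j : ℕ,
      μ 0 + (-1 : ℝ) ^ j * μ l +
          2 * ∑ k ∈ Finset.Ioo 0 l, μ k * Real.cos (π * (j : ℝ) * (k : ℝ) / (l : ℝ))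
        = ∑ k ∈ range (l + 1),
            (if k = 0 ∨ k = l then (1 : ℝ) else 2) * μ k * Real.cos (π * j * k / l) := by
    intro j
    rw [ccq_range_decomp l hl, Finset.sum_insert h0, Finset.sum_insert hli]
    rw [if_pos (Or.inl rfl), if_pos (Or.inr rfl)]
    have hIoo : ∀ k ∈ Ioo 0 l,
        (if k = 0 ∨ k = l then (1 : ℝ) else 2) * μ k * Real.cos (π * j * k / l)
          = 2 * (μ k * Real.cos (π * (j : ℝ) * (k : ℝ) / (l : ℝ))) := by
      intro k hk
      simp only [Finset.mem_Ioo] at hk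
      rw [if_neg (by omega)]
      ring
    rw [Finset.sum_congr rfl hIoo, ← Finset.mul_sum, hcosj j]
    simp only [Nat.cast_zero, mul_zero, zero_div, Real.cos_zero]
    ring
  have hterm : ∀ j ∈ range (l + 1), W j * Real.cos (π * j * m / l)
      = ∑ k ∈ range (l + 1),
          ((if k = 0 ∨ k = l then (1 : ℝ) else 2) * μ k / l) *
            ((1 - ((if j = 0 then (1 : ℝ) else 0) + (if j = l then (1 : ℝ) else 0)) / 2) *
              (Real.cos (π * j * k / l) * Real.cos (π * j * m / l))) := by
    intro j _
    rw [hW j, hA j, Finset.mul_sum, Finset.sum_mul]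
    apply Finset.sum_congr rfl
    intro k _
    ring
  rw [Finset.sum_congr rfl hterm, Finset.sum_comm]
  have hinner : ∀ k ∈ range (l + 1),
      (∑ j ∈ range (l + 1),
        ((if k = 0 ∨ k = l then (1 : ℝ) else 2) * μ k / l) *
          ((1 - ((if j = 0 then (1 : ℝ) else 0) + (if j = l then (1 : ℝ) else 0)) / 2) *
            (Real.cos (π * j * k / l) * Real.cos (π * j * m / l))))
      = ((if k = 0 ∨ k = l then (1 : ℝ) else 2) * μ k / l) *
          (if k = m then (if k = 0 ∨ k = l then (l : ℝ) else (l : ℝ) / 2) else 0) := by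
    intro k hk
    rw [← Finset.mul_sum, ccq_orth l hl k m (by simpa [Nat.lt_succ_iff] using hk) hm]
  rw [Finset.sum_congr rfl hinner]
  rw [Finset.sum_eq_single m]
  · rw [if_pos rfl]
    by_cases hm0 : m = 0 ∨ m = l
    · rw [if_pos hm0, if_pos hm0]
      field_simp
    · rw [if_neg hm0, if_neg hm0]
      field_simp
  · intro k _ hk
    rw [if_neg hk, mul_zero]
  · intro h
    exact absurd (Finset.mem_range.mpr (by omega)) h

private lemma ccq_two_c : (2 : ℝ[X]) * Polynomial.C (2⁻¹ : ℝ) = 1 := by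
  have h : Polynomial.C (2 : ℝ) = 2 := rfl
  rw [← h, ← Polynomial.C_mul]
  norm_num

private lemma ccq_X_mul_T (k : ℕ) :
    (X : ℝ[X]) * Polynomial.Chebyshev.T ℝ (k : ℤ) =
      (2⁻¹ : ℝ) • Polynomial.Chebyshev.T ℝ ((k : ℤ) + 1) +
        (2⁻¹ : ℝ) • Polynomial.Chebyshev.T ℝ ((k : ℤ) - 1) := by
  have h' : Polynomial.Chebyshev.T ℝ ((k : ℤ) + 1)
      = 2 * X * Polynomial.Chebyshev.T ℝ (k : ℤ) - Polynomial.Chebyshev.T ℝ ((k : ℤ) - 1) := by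
    have h := Polynomial.Chebyshev.T_add_two ℝ ((k : ℤ) - 1)
    rw [show (k : ℤ) - 1 + 2 = (k : ℤ) + 1 by ring, show (k : ℤ) - 1 + 1 = (k : ℤ) by ring] at h
    exact h
  rw [Polynomial.smul_eq_C_mul, Polynomial.smul_eq_C_mul]
  apply mul_left_cancel₀ (two_ne_zero' ℝ[X])
  linear_combination (-1 : ℝ[X]) * h' -
    (Polynomial.Chebyshev.T ℝ ((k : ℤ) + 1) + Polynomial.Chebyshev.T ℝ ((k : ℤ) - 1)) * ccq_two_c

private lemma ccq_X_pow_mem (n : ℕ) :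
    (X : ℝ[X]) ^ n ∈
      Submodule.span ℝ ((fun k : ℕ => Polynomial.Chebyshev.T ℝ (k : ℤ)) '' Set.Iic n) := by
  induction n with
  | zero =>
    apply Submodule.subset_span
    refine ⟨0, Set.mem_Iic.mpr le_rfl, ?_⟩
    simp [Polynomial.Chebyshev.T_zero]
  | succ n ih =>
    have key : ∀ p ∈ Submodule.span ℝ
        ((fun k : ℕ => Polynomial.Chebyshev.T ℝ (k : ℤ)) '' Set.Iic n),
        (X : ℝ[X]) * p ∈ Submodule.span ℝ
          ((fun k : ℕ => Polynomial.Chebyshev.T ℝ (k : ℤ)) '' Set.Iic (n + 1)) := by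
      intro p hp
      induction hp using Submodule.span_induction with
      | mem q hq =>
        obtain ⟨k, hk, rfl⟩ := hq
        replace hk := Set.mem_Iic.mp hk
        rw [ccq_X_mul_T k]
        apply Submodule.add_mem
        · apply Submodule.smul_mem
          apply Submodule.subset_span
          exact ⟨k + 1, Set.mem_Iic.mpr (by omega), by push_cast; rfl⟩
        · apply Submodule.smul_mem
          apply Submodule.subset_span
          match k with
          | 0 =>
            refine ⟨1, Set.mem_Iic.mpr (by omega), ?_⟩
            simp only [Nat.cast_zero, zero_sub, Nat.cast_one]
            exact (Polynomial.Chebyshev.T_neg ℝ 1).symm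
          | k + 1 =>
            refine ⟨k, Set.mem_Iic.mpr (by omega), ?_⟩
            push_cast
            ring_nf
      | zero => simp
      | add x y hx hy ihx ihy =>
        rw [mul_add]
        exact Submodule.add_mem _ ihx ihy
      | smul a x hx ih =>
        rw [mul_smul_comm]
        exact Submodule.smul_mem _ a ih
    rw [pow_succ, mul_comm]
    exact key _ ih

/-- Modified Clenshaw–Curtis quadrature for a general continuous weight `w`: with nodes the
Chebyshev–Lobatto points `x_j = cos(jπ/ℓ)` and weights computed from the modified Chebyshev
moments `μ_k = ∫ T_k(x) w(x) dx`, the quadrature is exact for polynomials of degree ≤ ℓ. -/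
theorem clenshaw_curtis_exact (l : ℕ) (hl : 1 ≤ l) (w : ℝ → ℝ)
    (hw : ContinuousOn w (Set.Icc (-1 : ℝ) 1))
    (μ : ℕ → ℝ)
    (hμ : ∀ k : ℕ, μ k = ∫ x in (-1 : ℝ)..1, (Polynomial.Chebyshev.T ℝ (k : ℤ)).eval x * w x)
    (W : ℕ → ℝ)
    (hW : ∀ j : ℕ, W j =
      (1 - ((if j = 0 then (1 : ℝ) else 0) + (if j = l then (1 : ℝ) else 0)) / 2) / (l : ℝ) *
        (μ 0 + (-1 : ℝ) ^ j * μ l +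
          2 * ∑ k ∈ Finset.Ioo 0 l, μ k * Real.cos (π * (j : ℝ) * (k : ℝ) / (l : ℝ))))
    (f : Polynomial ℝ) (hf : f.natDegree ≤ l) :
    (∫ x in (-1 : ℝ)..1, f.eval x * w x)
      = ∑ j ∈ Finset.range (l + 1), W j * f.eval (Real.cos ((j : ℝ) * π / (l : ℝ))) := by
  have hl0 : (l : ℝ) ≠ 0 := Nat.cast_ne_zero.mpr (by omega)
  have hwI : ∀ p : ℝ[X], IntervalIntegrable (fun x => p.eval x * w x) volume (-1) 1 := by
    intro p
    apply ContinuousOn.intervalIntegrable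
    rw [Set.uIcc_of_le (by norm_num : (-1 : ℝ) ≤ 1)]
    exact (p.continuous.continuousOn).mul hw
  have hfspan : f ∈ Submodule.span ℝ
      ((fun k : ℕ => Polynomial.Chebyshev.T ℝ (k : ℤ)) '' Set.Iic l) := by
    nth_rewrite 1 [f.as_sum_range' (l + 1) (Nat.lt_succ_of_le hf)]
    apply Submodule.sum_mem
    intro i hi
    rw [← Polynomial.smul_X_eq_monomial]
    apply Submodule.smul_mem
    apply Submodule.span_mono
      (Set.image_mono (Set.Iic_subset_Iic.mpr (Nat.lt_succ_iff.mp (Finset.mem_range.mp hi))))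
    exact ccq_X_pow_mem i
  clear hf
  induction hfspan using Submodule.span_induction with
  | mem p hp =>
    obtain ⟨k, hk, rfl⟩ := hp
    replace hk := Set.mem_Iic.mp hk
    rw [← hμ k]
    have hrw : ∀ j ∈ Finset.range (l + 1),
        W j * (Polynomial.Chebyshev.T ℝ (k : ℤ)).eval (Real.cos ((j : ℝ) * π / (l : ℝ)))
          = W j * Real.cos (π * j * k / l) := by
      intro j _
      rw [Polynomial.Chebyshev.T_real_cos]
      congr 2
      push_cast
      ring
    rw [Finset.sum_congr rfl hrw, ccq_key l hl μ W hW k hk]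
  | zero => simp
  | add p q hp hq ihp ihq =>
    simp only [Polynomial.eval_add, add_mul]
    rw [intervalIntegral.integral_add (hwI p) (hwI q), ihp, ihq, ← Finset.sum_add_distrib]
    apply Finset.sum_congr rfl
    intro j _
    ring
  | smul a p hp ih =>
    simp only [Polynomial.eval_smul, smul_eq_mul, mul_assoc]
    rw [intervalIntegral.integral_const_mul, ih, Finset.mul_sum]
    apply Finset.sum_congr rfl
    intro j _
    ring
end
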